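/- Let X --f--> M --g--> Y --h--> X[1] be a distinguished triangle in a Hom-finite Krull-Schmidt triangulated K-category T. Then f is right minimal if and only if g is left minimal. -/

import Mathlib

open CategoryTheory CategoryTheory.Limits CategoryTheory.Pretriangulated

universe v u

variable {C : Type u} [Category.{v} C]

/-- A morphism `f : X ⟶ M` is left minimal if any `g` with `f ≫ g = f` is an isomorphism. -/
def LeftMinimal {X M : C} (f : X ⟶ M) : Prop :=
  ∀ g : M ⟶ M, f ≫ g = f → IsIso g

/-- A morphism `f : X ⟶ M` is right minimal if any `g` with `g ≫ f = f` is an isomorphism. -/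
def RightMinimal {X M : C} (f : X ⟶ M) : Prop :=
  ∀ g : X ⟶ X, g ≫ f = f → IsIso g

/-- In a distinguished triangle `X ⟶ M ⟶ Y ⟶ X[1]` of a Hom-finite Krull-Schmidt
triangulated `K`-category, `f` is right minimal iff `g` is left minimal. -/
theorem rightMinimal_iff_leftMinimal
    (K : Type*) [Field K] [Preadditive C] [Linear K C] [HasZeroObject C]
    [HasShift C ℤ] [∀ n : ℤ, (shiftFunctor C n).Additive] [Pretriangulated C]
    [∀ X Y : C, FiniteDimensional K (X ⟶ Y)] [IsIdempotentComplete C]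
    {X M Y : C} (f : X ⟶ M) (g : M ⟶ Y) (h : Y ⟶ X⟦(1 : ℤ)⟧)
    (hT : Triangle.mk f g h ∈ distTriang C) :
    RightMinimal f ↔ LeftMinimal g := by
  constructor
  · intro hf u hu
    obtain ⟨a, ha₁, ha₂⟩ := complete_distinguished_triangle_morphism₁ _ _ hT hT (𝟙 M) u
      (hu.trans (Category.id_comp g).symm)
    have haf : a ≫ f = f := ha₁.symm.trans (Category.comp_id f)
    have : IsIso a := hf a haf
    exact isIso₃_of_isIso₁₂ (Triangle.homMk _ _ a (𝟙 M) u ha₁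
      (hu.trans (Category.id_comp g).symm) ha₂) hT hT this (inferInstanceAs (IsIso (𝟙 M)))
  · intro hg a ha
    obtain ⟨c, hc₁, hc₂⟩ := complete_distinguished_triangle_morphism _ _ hT hT a (𝟙 M)
      ((Category.comp_id f).trans ha.symm)
    have : IsIso c := hg c (hc₁.trans (Category.id_comp g))
    exact isIso₁_of_isIso₂₃ (Triangle.homMk _ _ a (𝟙 M) c ((Category.comp_id f).trans ha.symm)
      hc₁ hc₂) hT hT (inferInstanceAs (IsIso (𝟙 M))) this
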